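/- For |q|<1 and c not equal to 1 or a negative integer power of q, the series ₀φ₁ satisfies ₀φ₁(−; cq; q, xq) = (c − x) · ₀φ₁(−; cq; q, xq²) + (1 − c) · ₀φ₁(−; c; q, x). -/

import Mathlib

open scoped BigOperators

/-- q-shifted factorial (a;q)_j -/
noncomputable def qPoch (a q : ℂ) (j : ℕ) : ℂ :=
  ∏ i ∈ Finset.range j, (1 - a * q ^ i)

/-- infinite q-shifted factorial (a;q)_∞ -/
noncomputable def qPochInf (a q : ℂ) : ℂ :=
  ∏' j : ℕ, (1 - a * q ^ j)

/-- basic hypergeometric series ₁φ₁(a; c; q, x) -/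
noncomputable def phi11 (a c q x : ℂ) : ℂ :=
  ∑' j : ℕ, qPoch a q j / (qPoch q q j * qPoch c q j) *
    (-1) ^ j * q ^ (j * (j - 1) / 2) * x ^ j

/-- basic hypergeometric series ₀φ₁(–; c; q, x) -/
noncomputable def phi01 (c q x : ℂ) : ℂ :=
  ∑' j : ℕ, q ^ (j * (j - 1)) * x ^ j / (qPoch q q j * qPoch c q j)

/-- basic hypergeometric series ₂φ₁(a, b; c; q, x) -/
noncomputable def phi21 (a b c q x : ℂ) : ℂ :=
  ∑' j : ℕ, qPoch a q j * qPoch b q j / (qPoch q q j * qPoch c q j) * x ^ j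

open Filter Topology

/-- generic term of ₀φ₁ -/
noncomputable def fterm (q d y : ℂ) (j : ℕ) : ℂ :=
  q ^ (j * (j - 1)) * y ^ j / (qPoch q q j * qPoch d q j)

lemma qPoch_ne_zero {a q : ℂ} (h : ∀ n : ℕ, a * q ^ n ≠ 1) (j : ℕ) :
    qPoch a q j ≠ 0 := by
  unfold qPoch
  refine Finset.prod_ne_zero_iff.2 fun i _ => ?_
  exact sub_ne_zero.2 fun hh => h i hh.symm

lemma q_self_ne_one {q : ℂ} (hq : ‖q‖ < 1) : ∀ n : ℕ, q * q ^ n ≠ 1 := by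
  intro n h
  have h1 : ‖q * q ^ n‖ < 1 := by
    rw [← pow_succ', norm_pow]
    exact pow_lt_one₀ (norm_nonneg _) hq (Nat.succ_ne_zero n)
  rw [h] at h1
  simp at h1

lemma qPoch_succ (a q : ℂ) (j : ℕ) :
    qPoch a q (j + 1) = qPoch a q j * (1 - a * q ^ j) :=
  Finset.prod_range_succ _ _

lemma qPoch_shift (c q : ℂ) (j : ℕ) :
    qPoch c q j * (1 - c * q ^ j) = (1 - c) * qPoch (c * q) q j := by
  induction j with
  | zero => simp [qPoch]
  | succ j ih =>
    rw [qPoch_succ, qPoch_succ]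
    have hpow : (1 : ℂ) - c * q ^ (j + 1) = 1 - c * q * q ^ j := by ring
    calc qPoch c q j * (1 - c * q ^ j) * (1 - c * q ^ (j + 1))
        = qPoch c q j * (1 - c * q ^ j) * (1 - c * q * q ^ j) := by rw [hpow]
      _ = (1 - c) * qPoch (c * q) q j * (1 - c * q * q ^ j) := by rw [ih]
      _ = (1 - c) * (qPoch (c * q) q j * (1 - c * q * q ^ j)) := by ring

lemma nat_exp_id (j : ℕ) : (j + 1) * ((j + 1) - 1) = j * (j - 1) + 2 * j := by
  cases j with
  | zero => rfl
  | succ k => simp [Nat.succ_sub_one]; ring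

lemma fterm_succ (q d y : ℂ) (hq : ‖q‖ < 1) (hd : ∀ n : ℕ, d * q ^ n ≠ 1) (j : ℕ) :
    fterm q d y (j + 1)
      = fterm q d y j * (q ^ (2 * j) * y / ((1 - q * q ^ j) * (1 - d * q ^ j))) := by
  have hQ : qPoch q q j ≠ 0 := qPoch_ne_zero (q_self_ne_one hq) j
  have hP : qPoch d q j ≠ 0 := qPoch_ne_zero hd j
  have h1 : (1 : ℂ) - q * q ^ j ≠ 0 := sub_ne_zero.2 fun hh => q_self_ne_one hq j hh.symm
  have h2 : (1 : ℂ) - d * q ^ j ≠ 0 := sub_ne_zero.2 fun hh => hd j hh.symm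
  unfold fterm
  rw [nat_exp_id, pow_add, qPoch_succ, qPoch_succ, pow_succ]
  field_simp

lemma summable_norm_fterm (q d y : ℂ) (hq : ‖q‖ < 1) (hd : ∀ n : ℕ, d * q ^ n ≠ 1) :
    Summable fun j : ℕ => ‖fterm q d y j‖ := by
  have hten : Tendsto
      (fun n : ℕ => ‖q ^ (2 * n) * y / ((1 - q * q ^ n) * (1 - d * q ^ n))‖)
      atTop (𝓝 0) := by
    have hq2 : ‖q ^ 2‖ < 1 := by
      rw [norm_pow]
      nlinarith [norm_nonneg q]
    have hnum : Tendsto (fun n : ℕ => q ^ (2 * n) * y) atTop (𝓝 0) := by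
      have h := (tendsto_pow_atTop_nhds_zero_of_norm_lt_one hq2).mul_const y
      rw [zero_mul] at h
      have hpm : (fun n : ℕ => q ^ (2 * n) * y) = fun n : ℕ => (q ^ 2) ^ n * y := by
        funext n; rw [pow_mul]
      rw [hpm]
      exact h
    have hqn : Tendsto (fun n : ℕ => (q : ℂ) ^ n) atTop (𝓝 0) :=
      tendsto_pow_atTop_nhds_zero_of_norm_lt_one hq
    have hden : Tendsto (fun n : ℕ => (1 - q * q ^ n) * (1 - d * q ^ n)) atTop (𝓝 1) := by
      have h1 : Tendsto (fun n : ℕ => (1 : ℂ) - q * q ^ n) atTop (𝓝 1) := by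
        have := (hqn.const_mul q).const_sub (1 : ℂ)
        simpa using this
      have h2 : Tendsto (fun n : ℕ => (1 : ℂ) - d * q ^ n) atTop (𝓝 1) := by
        have := (hqn.const_mul d).const_sub (1 : ℂ)
        simpa using this
      simpa using h1.mul h2
    have hdiv : Tendsto
        (fun n : ℕ => q ^ (2 * n) * y / ((1 - q * q ^ n) * (1 - d * q ^ n)))
        atTop (𝓝 0) := by
      have hd' := hnum.div hden (one_ne_zero)
      rw [zero_div] at hd'
      exact hd'
    simpa using hdiv.norm
  have hev : ∀ᶠ n in atTop,
      ‖q ^ (2 * n) * y / ((1 - q * q ^ n) * (1 - d * q ^ n))‖ < 1 / 2 :=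
    hten.eventually_lt_const (by norm_num)
  apply summable_of_ratio_norm_eventually_le (r := 1 / 2) (by norm_num)
  filter_upwards [hev] with n hn
  rw [norm_norm, norm_norm, fterm_succ q d y hq hd n, norm_mul]
  have h0 : (0 : ℝ) ≤ ‖fterm q d y n‖ := norm_nonneg _
  calc ‖fterm q d y n‖ * ‖q ^ (2 * n) * y / ((1 - q * q ^ n) * (1 - d * q ^ n))‖
      ≤ ‖fterm q d y n‖ * (1 / 2) := by
        exact mul_le_mul_of_nonneg_left hn.le h0
    _ = 1 / 2 * ‖fterm q d y n‖ := by ring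

lemma summable_fterm (q d y : ℂ) (hq : ‖q‖ < 1) (hd : ∀ n : ℕ, d * q ^ n ≠ 1) :
    Summable fun j : ℕ => fterm q d y j :=
  (summable_norm_fterm q d y hq hd).of_norm

theorem phi01_three_term_recurrence (q c x : ℂ) (hq : ‖q‖ < 1)
    (hc : ∀ n : ℕ, c * q ^ n ≠ 1) :
    phi01 (c * q) q (x * q)
      = (c - x) * phi01 (c * q) q (x * q ^ 2) + (1 - c) * phi01 c q x := by
  have hcq : ∀ n : ℕ, (c * q) * q ^ n ≠ 1 := by
    intro n h
    exact hc (n + 1) (by rw [pow_succ]; linear_combination h)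
  -- the telescoping sequence
  set A : ℕ → ℂ := fun j => (q ^ j - 1) * (1 - c * q ^ j) * fterm q (c * q) x j with hA_def
  have hA0 : A 0 = 0 := by simp [hA_def]
  -- summability facts
  have hF : Summable fun j => fterm q (c * q) (x * q) j := summable_fterm _ _ _ hq hcq
  have hG : Summable fun j => fterm q (c * q) (x * q ^ 2) j := summable_fterm _ _ _ hq hcq
  have hH : Summable fun j => fterm q c x j := summable_fterm _ _ _ hq hc
  have hA : Summable A := by
    apply Summable.of_norm_bounded (g := fun j => 2 * (1 + ‖c‖) * ‖fterm q (c * q) x j‖)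
      ((summable_norm_fterm q (c * q) x hq hcq).mul_left _)
    intro j
    have hqj : ‖q ^ j‖ ≤ 1 := by
      rw [norm_pow]; exact pow_le_one₀ (norm_nonneg _) hq.le
    have b1 : ‖q ^ j - (1 : ℂ)‖ ≤ 2 := by
      calc ‖q ^ j - (1 : ℂ)‖ ≤ ‖q ^ j‖ + ‖(1 : ℂ)‖ := norm_sub_le _ _
        _ ≤ 2 := by rw [norm_one]; linarith
    have b2 : ‖(1 : ℂ) - c * q ^ j‖ ≤ 1 + ‖c‖ := by
      calc ‖(1 : ℂ) - c * q ^ j‖ ≤ ‖(1 : ℂ)‖ + ‖c * q ^ j‖ := norm_sub_le _ _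
        _ ≤ 1 + ‖c‖ := by
            rw [norm_one, norm_mul]
            nlinarith [norm_nonneg c, norm_nonneg (q ^ j)]
    rw [hA_def]
    simp only [norm_mul]
    have h0 : (0 : ℝ) ≤ ‖fterm q (c * q) x j‖ := norm_nonneg _
    have hb : ‖q ^ j - (1 : ℂ)‖ * ‖(1 : ℂ) - c * q ^ j‖ ≤ 2 * (1 + ‖c‖) :=
      mul_le_mul b1 b2 (norm_nonneg _) (by norm_num)
    exact mul_le_mul_of_nonneg_right hb h0
  have hA1 : Summable fun j => A (j + 1) := (summable_nat_add_iff 1).2 hA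
  -- the termwise identity
  have hterm : ∀ j : ℕ,
      fterm q (c * q) (x * q) j
        = (A j - A (j + 1))
          + ((c - x) * fterm q (c * q) (x * q ^ 2) j + (1 - c) * fterm q c x j) := by
    intro j
    have hQ : qPoch q q j ≠ 0 := qPoch_ne_zero (q_self_ne_one hq) j
    have hC : qPoch c q j ≠ 0 := qPoch_ne_zero hc j
    have hCq : qPoch (c * q) q j ≠ 0 := qPoch_ne_zero hcq j
    have h1 : (1 : ℂ) - q * q ^ j ≠ 0 := sub_ne_zero.2 fun hh => q_self_ne_one hq j hh.symm
    have h2 : (1 : ℂ) - (c * q) * q ^ j ≠ 0 := sub_ne_zero.2 fun hh => hcq j hh.symm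
    have hshift : qPoch c q j * (1 - c * q ^ j) = (1 - c) * qPoch (c * q) q j :=
      qPoch_shift c q j
    have e1 : fterm q (c * q) (x * q) j = q ^ j * fterm q (c * q) x j := by
      unfold fterm; rw [mul_pow]; ring
    have e2 : fterm q (c * q) (x * q ^ 2) j = q ^ (2 * j) * fterm q (c * q) x j := by
      unfold fterm; rw [mul_pow, ← pow_mul]; ring
    have hrepl : (1 - c) * fterm q c x j
        = (1 - c * q ^ j) * fterm q (c * q) x j := by
      unfold fterm
      rw [mul_div_assoc', mul_div_assoc',
        div_eq_div_iff (mul_ne_zero hQ hC) (mul_ne_zero hQ hCq)]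
      linear_combination (-(q ^ (j * (j - 1)) * x ^ j * qPoch q q j)) * hshift
    have hA1j : A (j + 1) = -(x * q ^ (2 * j)) * fterm q (c * q) x j := by
      rw [hA_def]
      simp only
      rw [fterm_succ q (c * q) x hq hcq j]
      field_simp
      ring
    rw [e1, e2, hrepl, hA1j, hA_def]
    simp only
    ring
  -- assemble
  have key : (∑' j, fterm q (c * q) (x * q) j)
      = (∑' j, (A j - A (j + 1)))
        + ∑' j, ((c - x) * fterm q (c * q) (x * q ^ 2) j + (1 - c) * fterm q c x j) := by
    rw [← Summable.tsum_add (hA.sub hA1) ((hG.mul_left _).add (hH.mul_left _))]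
    exact tsum_congr hterm
  have htel : (∑' j, (A j - A (j + 1))) = 0 := by
    rw [Summable.tsum_sub hA hA1]
    have := Summable.tsum_eq_zero_add hA
    rw [hA0] at this
    rw [this]
    ring
  have hsplit : (∑' j, ((c - x) * fterm q (c * q) (x * q ^ 2) j + (1 - c) * fterm q c x j))
      = (c - x) * (∑' j, fterm q (c * q) (x * q ^ 2) j)
        + (1 - c) * (∑' j, fterm q c x j) := by
    rw [Summable.tsum_add (hG.mul_left _) (hH.mul_left _), tsum_mul_left, tsum_mul_left]
  have : phi01 (c * q) q (x * q) = ∑' j, fterm q (c * q) (x * q) j := rfl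
  rw [this, key, htel, hsplit, zero_add]
  rfl
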